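/- Let D ≥ 2, R > 0, σ > 0, and define f(r) = exp(-r²/(2σ²)) · ∫₀^π sin^{D-2}(φ) · exp(rR cos(φ)/σ²) dφ for r ≥ 0. If σ ≥ R/√(D-1), then f attains its global maximum over [0,∞) at r = 0. -/

import Mathlib

open Real MeasureTheory intervalIntegral

noncomputable def Gaux (m : ℕ) (a : ℝ) : ℝ :=
  ∫ φ in (0:ℝ)..Real.pi, Real.sin φ ^ m * Real.exp (a * Real.cos φ)

lemma Gaux_integrable (m : ℕ) (a : ℝ) :
    IntervalIntegrable (fun φ => Real.sin φ ^ m * Real.exp (a * Real.cos φ))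
      volume 0 Real.pi :=
  by apply Continuous.intervalIntegrable; fun_prop

lemma Gaux_deriv_integrable (m : ℕ) (a : ℝ) :
    IntervalIntegrable (fun φ => Real.sin φ ^ m * (Real.exp (a * Real.cos φ) * Real.cos φ))
      volume 0 Real.pi :=
  by apply Continuous.intervalIntegrable; fun_prop

lemma Gaux_hasDeriv (m : ℕ) (a : ℝ) :
    HasDerivAt (Gaux m)
      (∫ φ in (0:ℝ)..Real.pi,
        Real.sin φ ^ m * (Real.exp (a * Real.cos φ) * Real.cos φ)) a := by
  have key := intervalIntegral.hasDerivAt_integral_of_dominated_loc_of_deriv_le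
    (F := fun (x : ℝ) (φ : ℝ) => Real.sin φ ^ m * Real.exp (x * Real.cos φ))
    (F' := fun (x : ℝ) (φ : ℝ) => Real.sin φ ^ m * (Real.exp (x * Real.cos φ) * Real.cos φ))
    (x₀ := a) (bound := fun _ => Real.exp (|a| + 1)) (μ := volume)
    (a := 0) (b := Real.pi) (s := Metric.ball a 1) (Metric.ball_mem_nhds a one_pos)
    (Filter.Eventually.of_forall fun x =>
      (Continuous.aestronglyMeasurable (by fun_prop)))
    (Gaux_integrable m a)
    (Continuous.aestronglyMeasurable (by fun_prop))
    ?_ (intervalIntegrable_const) ?_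
  · exact key.2
  · filter_upwards with t _ x hx
    have hx1 : |x| ≤ |a| + 1 := by
      have := abs_sub_abs_le_abs_sub x a
      have hd : |x - a| < 1 := by simpa [Real.dist_eq] using hx
      linarith
    have h1 : |Real.sin t ^ m| ≤ 1 := by
      rw [abs_pow]; exact pow_le_one₀ (abs_nonneg _) (Real.abs_sin_le_one t)
    have h2 : |Real.cos t| ≤ 1 := Real.abs_cos_le_one t
    have h3 : Real.exp (x * Real.cos t) ≤ Real.exp (|a| + 1) := by
      apply Real.exp_le_exp.2
      calc x * Real.cos t ≤ |x * Real.cos t| := le_abs_self _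
        _ = |x| * |Real.cos t| := abs_mul _ _
        _ ≤ (|a| + 1) * 1 := by
            apply mul_le_mul hx1 h2 (abs_nonneg _) (by positivity)
        _ = |a| + 1 := mul_one _
    have : ‖Real.sin t ^ m * (Real.exp (x * Real.cos t) * Real.cos t)‖
        = |Real.sin t ^ m| * (Real.exp (x * Real.cos t) * |Real.cos t|) := by
      rw [Real.norm_eq_abs, abs_mul, abs_mul, abs_of_pos (Real.exp_pos _)]
    rw [this]
    calc |Real.sin t ^ m| * (Real.exp (x * Real.cos t) * |Real.cos t|)
        ≤ 1 * (Real.exp (|a| + 1) * 1) := by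
          apply mul_le_mul h1 (mul_le_mul h3 h2 (abs_nonneg _) (Real.exp_pos _).le) (by positivity) one_pos.le
      _ = Real.exp (|a| + 1) := by ring
  · filter_upwards with t _ x _
    exact ((hasDerivAt_mul_const (Real.cos t)).exp).const_mul (Real.sin t ^ m)

lemma Gaux_ibp (m : ℕ) (a : ℝ) :
    ((m : ℝ) + 1) * (∫ φ in (0:ℝ)..Real.pi,
        Real.sin φ ^ m * (Real.exp (a * Real.cos φ) * Real.cos φ))
      = a * Gaux (m + 2) a := by
  have hu : ∀ x ∈ Set.uIcc (0:ℝ) Real.pi,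
      HasDerivAt (fun φ => Real.sin φ ^ (m + 1))
        (((m : ℝ) + 1) * Real.sin x ^ m * Real.cos x) x := by
    intro x _
    have := (Real.hasDerivAt_sin x).fun_pow (m + 1)
    simpa [Nat.add_sub_cancel, mul_comm, mul_assoc] using this
  have hv : ∀ x ∈ Set.uIcc (0:ℝ) Real.pi,
      HasDerivAt (fun φ => Real.exp (a * Real.cos φ))
        (Real.exp (a * Real.cos x) * (a * (-Real.sin x))) x := by
    intro x _
    exact ((Real.hasDerivAt_cos x).const_mul a).exp
  have hu' : IntervalIntegrable (fun x => ((m : ℝ) + 1) * Real.sin x ^ m * Real.cos x)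
      volume 0 Real.pi := by apply Continuous.intervalIntegrable; fun_prop
  have hv' : IntervalIntegrable (fun x => Real.exp (a * Real.cos x) * (a * (-Real.sin x)))
      volume 0 Real.pi := by apply Continuous.intervalIntegrable; fun_prop
  have key := intervalIntegral.integral_deriv_mul_eq_sub hu hv hu' hv'
  simp only [Real.sin_pi, Real.sin_zero] at key
  rw [zero_pow (Nat.succ_ne_zero m), zero_mul, zero_mul, sub_zero] at key
  have hsplit : ∀ x : ℝ,
      ((m : ℝ) + 1) * Real.sin x ^ m * Real.cos x * Real.exp (a * Real.cos x)
        + Real.sin x ^ (m + 1) * (Real.exp (a * Real.cos x) * (a * (-Real.sin x)))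
      = ((m : ℝ) + 1) * (Real.sin x ^ m * (Real.exp (a * Real.cos x) * Real.cos x))
        - a * (Real.sin x ^ (m + 2) * Real.exp (a * Real.cos x)) := by
    intro x; ring
  rw [intervalIntegral.integral_congr (fun x _ => hsplit x)] at key
  rw [intervalIntegral.integral_sub
    (((Gaux_deriv_integrable m a)).const_mul _)
    ((Gaux_integrable (m + 2) a).const_mul _)] at key
  rw [intervalIntegral.integral_const_mul, intervalIntegral.integral_const_mul] at key
  have : ((m : ℝ) + 1) * (∫ φ in (0:ℝ)..Real.pi,
        Real.sin φ ^ m * (Real.exp (a * Real.cos φ) * Real.cos φ))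
      = a * ∫ φ in (0:ℝ)..Real.pi, Real.sin φ ^ (m + 2) * Real.exp (a * Real.cos φ) := by
    linarith
  simpa [Gaux] using this

lemma Gaux_mono (m : ℕ) (a : ℝ) : Gaux (m + 2) a ≤ Gaux m a := by
  apply intervalIntegral.integral_mono_on Real.pi_pos.le
    (Gaux_integrable (m + 2) a) (Gaux_integrable m a)
  intro x hx
  have hs0 : 0 ≤ Real.sin x := Real.sin_nonneg_of_nonneg_of_le_pi hx.1 hx.2
  have hs1 : Real.sin x ≤ 1 := Real.sin_le_one x
  have : Real.sin x ^ (m + 2) ≤ Real.sin x ^ m :=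
    pow_le_pow_of_le_one hs0 hs1 (by omega)
  exact mul_le_mul_of_nonneg_right this (Real.exp_pos _).le

theorem stmt_0 (D : ℕ) (hD : 2 ≤ D) (R σ : ℝ) (hR : 0 < R) (hσ : 0 < σ)
    (f : ℝ → ℝ)
    (hf : ∀ r : ℝ, f r = Real.exp (-r ^ 2 / (2 * σ ^ 2)) *
      ∫ φ in (0:ℝ)..Real.pi,
        Real.sin φ ^ (D - 2) * Real.exp (r * R * Real.cos φ / σ ^ 2))
    (hσR : σ ≥ R / Real.sqrt (D - 1)) :
    ∀ r : ℝ, 0 ≤ r → f r ≤ f 0 := by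
  intro r hr
  set m : ℕ := D - 2 with hm
  have hm1 : (m : ℝ) + 1 = (D : ℝ) - 1 := by
    have h2 : ((D - 2 : ℕ) : ℝ) = (D : ℝ) - 2 := by
      rw [Nat.cast_sub hD]; norm_num
    rw [hm, h2]; ring
  have hm1pos : (0:ℝ) < (m : ℝ) + 1 := by positivity
  -- R^2 ≤ σ^2 * (m+1)
  have hR2 : R ^ 2 ≤ σ ^ 2 * ((m : ℝ) + 1) := by
    have hsq : Real.sqrt ((D : ℝ) - 1) > 0 := by
      apply Real.sqrt_pos.2; rw [← hm1]; exact hm1pos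
    have hRle : R ≤ σ * Real.sqrt ((D : ℝ) - 1) := by
      rw [ge_iff_le, div_le_iff₀ hsq] at hσR; exact hσR
    calc R ^ 2 ≤ (σ * Real.sqrt ((D : ℝ) - 1)) ^ 2 := by
          apply pow_le_pow_left₀ hR.le hRle
      _ = σ ^ 2 * ((D : ℝ) - 1) := by
          rw [mul_pow, Real.sq_sqrt (by rw [← hm1]; positivity)]
      _ = σ ^ 2 * ((m : ℝ) + 1) := by rw [hm1]
  -- H is antitone on [0, ∞)
  set c : ℝ := (2 * ((m : ℝ) + 1))⁻¹ with hc
  have hcpos : 0 < c := by positivity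
  set H : ℝ → ℝ := fun a => Gaux m a * Real.exp (-(a ^ 2) * c) with hH
  have hHderiv : ∀ a : ℝ, HasDerivAt H
      ((∫ φ in (0:ℝ)..Real.pi,
          Real.sin φ ^ m * (Real.exp (a * Real.cos φ) * Real.cos φ)) * Real.exp (-(a ^ 2) * c)
        + Gaux m a * (Real.exp (-(a ^ 2) * c) * (-(2 * a ^ 1) * c))) a := by
    intro a
    exact (Gaux_hasDeriv m a).mul (((hasDerivAt_pow 2 a).neg.mul_const c).exp)
  have hanti : AntitoneOn H (Set.Ici (0:ℝ)) := by
    apply antitoneOn_of_deriv_nonpos (convex_Ici 0)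
    · exact fun x _ => ((hHderiv x).differentiableAt).continuousAt.continuousWithinAt
    · intro x _
      exact ((hHderiv x).differentiableAt).differentiableWithinAt
    · intro x hx
      rw [interior_Ici] at hx
      rw [(hHderiv x).deriv]
      have hxpos : 0 < x := hx
      -- key: derivative of Gaux
      have hibp := Gaux_ibp m x
      have hDval : (∫ φ in (0:ℝ)..Real.pi,
          Real.sin φ ^ m * (Real.exp (x * Real.cos φ) * Real.cos φ))
          = x * Gaux (m + 2) x / ((m : ℝ) + 1) := by
        rw [eq_div_iff hm1pos.ne']
        linarith [hibp]
      rw [hDval]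
      have hmono := Gaux_mono m x
      have hexp : 0 < Real.exp (-(x ^ 2) * c) := Real.exp_pos _
      have h2c : -(2 * x ^ 1) * c = -(x / ((m:ℝ) + 1)) := by
        rw [hc]; field_simp
      rw [h2c]
      have hkey : x * Gaux (m + 2) x / ((m : ℝ) + 1) * Real.exp (-(x ^ 2) * c)
          + Gaux m x * (Real.exp (-(x ^ 2) * c) * -(x / ((m:ℝ) + 1)))
          = (Real.exp (-(x ^ 2) * c) * x / ((m : ℝ) + 1))
            * (Gaux (m + 2) x - Gaux m x) := by ring
      rw [hkey]
      apply mul_nonpos_of_nonneg_of_nonpos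
      · positivity
      · linarith
  -- rewrite f
  have hf0 : f 0 = Gaux m 0 := by
    rw [hf 0]
    simp [Gaux]
  set a : ℝ := r * R / σ ^ 2 with ha
  have hfr : f r = Real.exp (-r ^ 2 / (2 * σ ^ 2)) * Gaux m a := by
    rw [hf r]
    congr 1
    apply intervalIntegral.integral_congr
    intro φ _
    show Real.sin φ ^ m * Real.exp (r * R * Real.cos φ / σ ^ 2)
        = Real.sin φ ^ m * Real.exp (a * Real.cos φ)
    congr 1
    rw [ha]; ring
  have hG0 : 0 ≤ Gaux m 0 := by
    apply intervalIntegral.integral_nonneg Real.pi_pos.le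
    intro x hx
    have := Real.sin_nonneg_of_nonneg_of_le_pi hx.1 hx.2
    positivity
  have hanonneg : 0 ≤ a := by rw [ha]; positivity
  have hHa : H a ≤ H 0 := hanti (Set.self_mem_Ici) hanonneg hanonneg
  have hH0 : H 0 = Gaux m 0 := by simp [hH]
  -- G a = H a * exp(a^2 * c)
  have hGa : Gaux m a = H a * Real.exp (a ^ 2 * c) := by
    rw [hH]
    rw [mul_assoc, ← Real.exp_add]
    simp
  have hexpbound : Real.exp (-r ^ 2 / (2 * σ ^ 2)) * Real.exp (a ^ 2 * c) ≤ 1 := by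
    rw [← Real.exp_add, ← Real.exp_zero]
    apply Real.exp_le_exp.2
    have : a ^ 2 * c ≤ r ^ 2 / (2 * σ ^ 2) := by
      rw [ha, hc, div_pow, ← div_eq_mul_inv, div_div,
        div_le_div_iff₀ (by positivity) (by positivity)]
      nlinarith [mul_nonneg (mul_nonneg (sq_nonneg r) (sq_nonneg σ))
        (by linarith : (0:ℝ) ≤ σ ^ 2 * ((m:ℝ) + 1) - R ^ 2)]
    have hx : -r ^ 2 / (2 * σ ^ 2) = -(r ^ 2 / (2 * σ ^ 2)) := by ring
    rw [hx]
    linarith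
  calc f r = Real.exp (-r ^ 2 / (2 * σ ^ 2)) * (H a * Real.exp (a ^ 2 * c)) := by
        rw [hfr, hGa]
    _ ≤ Real.exp (-r ^ 2 / (2 * σ ^ 2)) * (Gaux m 0 * Real.exp (a ^ 2 * c)) := by
        apply mul_le_mul_of_nonneg_left _ (Real.exp_pos _).le
        apply mul_le_mul_of_nonneg_right _ (Real.exp_pos _).le
        rw [← hH0]; exact hHa
    _ = (Real.exp (-r ^ 2 / (2 * σ ^ 2)) * Real.exp (a ^ 2 * c)) * Gaux m 0 := by ring
    _ ≤ 1 * Gaux m 0 := mul_le_mul_of_nonneg_right hexpbound hG0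
    _ = f 0 := by rw [one_mul, hf0]
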